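/- (Parabolic Vitali covering lemma.) For z = (x,t) ∈ ℝ³ × ℝ and r > 0 let Q_r(z) = B_r(x) × (t − r², t) and Q*(z,r) = B_r(x) × (t − (7/8)r², t + (1/8)r²). Let 𝒥 be any collection of parabolic cylinders Q_{r_α}(z_α) all contained in a fixed bounded subset of ℝ⁴. Then there exists a countable subfamily { Q_{r_j}(z_j) }_{j∈ℕ} ⊆ 𝒥 of pairwise disjoint cylinders such that every cylinder Q_{r_α}(z_α) ∈ 𝒥 is contained in Q*(z_j, 10·r_j) for some j. -/

import Mathlib

open MeasureTheory Set

noncomputable section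

abbrev E3 := EuclideanSpace ℝ (Fin 3)

/-- The parabolic cylinder `Q_r(z) = B_r(x) × (t − r², t)` for `z = (x,t)`. -/
def Qcyl (z : E3 × ℝ) (r : ℝ) : Set (E3 × ℝ) :=
  Metric.ball z.1 r ×ˢ Set.Ioo (z.2 - r ^ 2) z.2

/-- The time-translated cylinder `Q*(z,r) = B_r(x) × (t − (7/8)r², t + (1/8)r²)`. -/
def Qstar (z : E3 × ℝ) (r : ℝ) : Set (E3 × ℝ) :=
  Metric.ball z.1 r ×ˢ Set.Ioo (z.2 - 7/8 * r ^ 2) (z.2 + 1/8 * r ^ 2)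

/-- Geometric key lemma: if two parabolic cylinders intersect and `r a ≤ 2 * r b`, then the
first cylinder is contained in `Q*(z b, 10 r b)`. -/
lemma Qcyl_subset_Qstar {za zb : E3 × ℝ} {ra rb : ℝ} (hra : 0 < ra) (hrb : 0 < rb)
    (hint : (Qcyl za ra ∩ Qcyl zb rb).Nonempty) (hle : ra ≤ 2 * rb) :
    Qcyl za ra ⊆ Qstar zb (10 * rb) := by
  obtain ⟨⟨y, s⟩, ⟨hya, hsa⟩, ⟨hyb, hsb⟩⟩ := hint
  rintro ⟨y', s'⟩ ⟨hy', hs'⟩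
  simp only [Qcyl, Set.mem_prod, Metric.mem_ball, Set.mem_Ioo] at *
  constructor
  · calc dist y' zb.1 ≤ dist y' za.1 + dist za.1 y + dist y zb.1 := dist_triangle4 _ _ _ _
    _ < ra + ra + rb := by
        have := hya
        rw [dist_comm] at this
        linarith [hy', this, hyb]
    _ ≤ 10 * rb := by nlinarith
  · constructor
    · nlinarith [hs'.1, hs'.2, hsa.1, hsa.2, hsb.1, hsb.2]
    · nlinarith [hs'.1, hs'.2, hsa.1, hsa.2, hsb.1, hsb.2]

/-- Parabolic Vitali covering lemma: from any collection of parabolic cylinders contained in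
a bounded subset of `ℝ⁴ = ℝ³ × ℝ` one can extract a countable pairwise disjoint subfamily
such that every cylinder of the collection is contained in `Q*(z_j, 10 r_j)` for some member
of the subfamily. -/
theorem parabolic_vitali_covering {ι : Type*} (z : ι → E3 × ℝ) (r : ι → ℝ)
    (hr : ∀ a : ι, 0 < r a)
    (hbdd : ∃ B : Set (E3 × ℝ), Bornology.IsBounded B ∧ ∀ a : ι, Qcyl (z a) (r a) ⊆ B) :
    ∃ J : Set ι, J.Countable ∧
      (J.PairwiseDisjoint fun j => Qcyl (z j) (r j)) ∧
      ∀ a : ι, ∃ j ∈ J, Qcyl (z a) (r a) ⊆ Qstar (z j) (10 * r j) := by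
  obtain ⟨B, hB, hQB⟩ := hbdd
  obtain ⟨C, hC⟩ := Metric.isBounded_iff.1 hB
  -- each cylinder is nonempty
  have hne : ∀ a : ι, (Qcyl (z a) (r a)).Nonempty := by
    intro a
    refine ⟨((z a).1, (z a).2 - (r a)^2 / 2), ?_, ?_⟩
    · exact Metric.mem_ball_self (hr a)
    · constructor <;> nlinarith [hr a, sq_nonneg (r a)]
  -- bound on the radii
  have hRb : ∀ a : ι, r a ≤ Real.sqrt (2 * C) := by
    intro a
    have hp : ((z a).1, (z a).2 - (r a)^2 / 4) ∈ Qcyl (z a) (r a) := by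
      refine ⟨Metric.mem_ball_self (hr a), ?_, ?_⟩ <;> nlinarith [hr a]
    have hq : ((z a).1, (z a).2 - (r a)^2 * 3 / 4) ∈ Qcyl (z a) (r a) := by
      refine ⟨Metric.mem_ball_self (hr a), ?_, ?_⟩ <;> nlinarith [hr a]
    have hd := hC (hQB a hp) (hQB a hq)
    have hdist : dist ((z a).1, (z a).2 - (r a)^2 / 4) ((z a).1, (z a).2 - (r a)^2 * 3 / 4)
        = (r a)^2 / 2 := by
      rw [Prod.dist_eq]
      simp [Real.dist_eq]
      rw [abs_of_nonneg (by nlinarith [hr a])]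
      ring
    rw [hdist] at hd
    calc r a = Real.sqrt ((r a)^2) := (Real.sqrt_sq (hr a).le).symm
    _ ≤ Real.sqrt (2*C) := Real.sqrt_le_sqrt (by linarith)
  obtain ⟨u, -, hdisj, hcov⟩ :=
    Vitali.exists_disjoint_subfamily_covering_enlargement (fun a => Qcyl (z a) (r a)) Set.univ r
      2 one_lt_two (fun a _ => (hr a).le) (Real.sqrt (2 * C)) (fun a _ => hRb a)
      (fun a _ => hne a)
  refine ⟨u, ?_, hdisj, ?_⟩
  · refine hdisj.countable_of_nonempty_interior ?_
    intro a _
    have : IsOpen (Qcyl (z a) (r a)) := Metric.isOpen_ball.prod isOpen_Ioo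
    rw [this.interior_eq]
    exact hne a
  · intro a
    obtain ⟨j, hj, hint, hle⟩ := hcov a (Set.mem_univ a)
    exact ⟨j, hj, Qcyl_subset_Qstar (hr a) (hr j) hint hle⟩
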